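/- arXiv:1407.2095 — 2 statements merged into one kernel-verified Lean document; each statement's English description precedes it below -/
import Mathlib

section
/- Let N = 2M, θ ∈ ℝ with cos θ ≠ 0, suppose the I-OEE relations L_{k+M} = L_k, B_k = β_{k+M}, B_{k+M} = β_k hold for k = 1..M, and suppose the continuity constraint ∑_{k=1}^{M} L_k(cos β_k + cos β_{k+M}) = 0 holds. Define Δx_k, Δy_k as usual and choose Δz_k with Δz_k² = L_k² - Δx_k² - Δy_k² for k = 1..M and Δz_{k+M} = -Δz_k. Then ∑_{k=1}^{N} Δx_k = 0, ∑_{k=1}^{N} Δy_k = 0, and ∑_{k=1}^{N} Δz_k = 0; i.e., the juncture polygon closes for every value of θ. -/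
open Finset

lemma pair_sum_aux (M : ℕ) (f : ℕ → ℝ) :
    ∑ k ∈ Icc 1 (2 * M), f k = ∑ k ∈ Icc 1 M, (f k + f (k + M)) := by
  rw [Finset.sum_add_distrib]
  have h1 : Icc 1 (2 * M) = Icc 1 M ∪ Icc (M + 1) (2 * M) := by
    ext a; simp only [Finset.mem_Icc, Finset.mem_union]; omega
  have h2 : Icc (M + 1) (2 * M) = (Icc 1 M).map (addRightEmbedding M) := by
    rw [Finset.map_add_right_Icc]
    congr 1 <;> omega
  rw [h1, Finset.sum_union, h2, Finset.sum_map]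
  · rfl
  · rw [Finset.disjoint_left]
    intro a ha hb
    simp only [Finset.mem_Icc] at ha hb
    omega

theorem stmt8 (M N : ℕ) (hM : 1 ≤ M) (hN : N = 2 * M)
    (θ : ℝ) (hθ : Real.cos θ ≠ 0)
    (L β B Δx Δy Δz : ℕ → ℝ)
    (hL : ∀ k, L (k + M) = L k)
    (hβ : ∀ k, B k = β (k + M))
    (hB : ∀ k, B (k + M) = β k)
    (hcont : ∑ k ∈ Icc 1 M, L k * (Real.cos (β k) + Real.cos (β (k + M))) = 0)
    (hx : ∀ k, Δx k = L k * (Real.cos (B k) - Real.cos (β k)) / (2 * Real.cos θ))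
    (hy : ∀ k, Δy k = -(L k * (Real.cos (B k) + Real.cos (β k))) / (2 * Real.cos θ))
    (hz : ∀ k, 1 ≤ k → k ≤ M → Δz k ^ 2 = L k ^ 2 - Δx k ^ 2 - Δy k ^ 2)
    (hz' : ∀ k, 1 ≤ k → k ≤ M → Δz (k + M) = -Δz k) :
    (∑ k ∈ Icc 1 N, Δx k = 0) ∧ (∑ k ∈ Icc 1 N, Δy k = 0) ∧
    (∑ k ∈ Icc 1 N, Δz k = 0) := by
  subst hN
  refine ⟨?_, ?_, ?_⟩
  · rw [pair_sum_aux]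
    apply Finset.sum_eq_zero
    intro k _
    rw [hx, hx, hL, hB, hβ]
    ring
  · rw [pair_sum_aux]
    have : ∀ k, Δy k + Δy (k + M) =
        (L k * (Real.cos (β k) + Real.cos (β (k + M)))) * (-(Real.cos θ)⁻¹) := by
      intro k
      rw [hy, hy, hL, hB, hβ]
      field_simp
      ring
    simp_rw [this, ← Finset.sum_mul, hcont, zero_mul]
  · rw [pair_sum_aux]
    apply Finset.sum_eq_zero
    intro k hk
    simp only [Finset.mem_Icc] at hk
    rw [hz' k hk.1 hk.2]
    ring
end

section
/- Let N = 2M, M ≥ 2, and suppose the III-OAE relations hold with L odd, L = 2k_x + 1 (so β_{2k-1} = β, B_{2k-1} = B for k ≤ k_x, β_{2k-1} = π - β, B_{2k-1} = π - B for k > k_x, β_{2k} = π - B, B_{2k} = π - β for k ≤ k_x, β_{2k} = B, B_{2k} = β for k > k_x). If ∑_{k=1}^{k_x} L_{2k} = ∑_{k=k_x+1}^{M} L_{2k} and ∑_{k=1}^{k_x} L_{2k-1} = ∑_{k=k_x+1}^{M} L_{2k-1}, then ∑_{k=1}^{N} L_k cos β_k = 0 and ∑_{k=1}^{N} L_k cos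 B_k = 0. -/
open Finset

lemma sum_pair_aux (f : ℕ → ℝ) (M : ℕ) :
    ∑ k ∈ Icc 1 (2 * M), f k = ∑ j ∈ Icc 1 M, (f (2 * j - 1) + f (2 * j)) := by
  induction M with
  | zero => simp
  | succ m ih =>
    have h1 : 2 * (m + 1) = (2 * m + 1) + 1 := by ring
    rw [h1, Finset.sum_Icc_succ_top (by omega), Finset.sum_Icc_succ_top (by omega),
      Finset.sum_Icc_succ_top (by omega), ih]
    have : 2 * (m + 1) - 1 = 2 * m + 1 := by omega
    rw [this, h1]
    ring

theorem stmt15 (M N kx : ℕ) (hM : 2 ≤ M) (hN : N = 2 * M) (hkx : 1 ≤ kx)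
    (hkx' : 2 * kx + 1 ≤ N - 2)
    (b Bb : ℝ) (L β B : ℕ → ℝ)
    (hodd1 : ∀ k, 1 ≤ k → k ≤ kx → β (2 * k - 1) = b ∧ B (2 * k - 1) = Bb)
    (hodd2 : ∀ k, kx + 1 ≤ k → k ≤ M →
      β (2 * k - 1) = Real.pi - b ∧ B (2 * k - 1) = Real.pi - Bb)
    (heven1 : ∀ k, 1 ≤ k → k ≤ kx →
      β (2 * k) = Real.pi - Bb ∧ B (2 * k) = Real.pi - b)
    (heven2 : ∀ k, kx + 1 ≤ k → k ≤ M → β (2 * k) = Bb ∧ B (2 * k) = b)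
    (hlen1 : ∑ k ∈ Icc 1 kx, L (2 * k) = ∑ k ∈ Icc (kx + 1) M, L (2 * k))
    (hlen2 : ∑ k ∈ Icc 1 kx, L (2 * k - 1) = ∑ k ∈ Icc (kx + 1) M, L (2 * k - 1)) :
    ∑ k ∈ Icc 1 N, L k * Real.cos (β k) = 0 ∧
    ∑ k ∈ Icc 1 N, L k * Real.cos (B k) = 0 := by
  have hkxM : kx + 1 ≤ M := by omega
  have hsplit : Icc 1 kx ∪ Icc (kx + 1) M = Icc 1 M := by
    ext a; simp only [Finset.mem_union, mem_Icc]; omega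
  have hdisj : Disjoint (Icc 1 kx) (Icc (kx + 1) M) := by
    rw [Finset.disjoint_left]; intro a ha hb
    simp only [mem_Icc] at ha hb; omega
  constructor
  · rw [hN, sum_pair_aux]
    rw [← hsplit, Finset.sum_union hdisj]
    have e1 : ∑ j ∈ Icc 1 kx, (L (2*j-1) * Real.cos (β (2*j-1)) + L (2*j) * Real.cos (β (2*j)))
        = (∑ j ∈ Icc 1 kx, L (2*j-1)) * Real.cos b - (∑ j ∈ Icc 1 kx, L (2*j)) * Real.cos Bb := by
      rw [Finset.sum_mul, Finset.sum_mul, ← Finset.sum_sub_distrib]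
      apply Finset.sum_congr rfl
      intro j hj; simp only [mem_Icc] at hj
      rw [(hodd1 j hj.1 hj.2).1, (heven1 j hj.1 hj.2).1, Real.cos_pi_sub]; ring
    have e2 : ∑ j ∈ Icc (kx+1) M, (L (2*j-1) * Real.cos (β (2*j-1)) + L (2*j) * Real.cos (β (2*j)))
        = -(∑ j ∈ Icc (kx+1) M, L (2*j-1)) * Real.cos b + (∑ j ∈ Icc (kx+1) M, L (2*j)) * Real.cos Bb := by
      rw [neg_mul, neg_add_eq_sub, Finset.sum_mul, Finset.sum_mul, ← Finset.sum_sub_distrib]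
      apply Finset.sum_congr rfl
      intro j hj; simp only [mem_Icc] at hj
      rw [(hodd2 j hj.1 hj.2).1, (heven2 j hj.1 hj.2).1, Real.cos_pi_sub]; ring
    rw [e1, e2, hlen1, hlen2]; ring
  · rw [hN, sum_pair_aux]
    rw [← hsplit, Finset.sum_union hdisj]
    have e1 : ∑ j ∈ Icc 1 kx, (L (2*j-1) * Real.cos (B (2*j-1)) + L (2*j) * Real.cos (B (2*j)))
        = (∑ j ∈ Icc 1 kx, L (2*j-1)) * Real.cos Bb - (∑ j ∈ Icc 1 kx, L (2*j)) * Real.cos b := by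
      rw [Finset.sum_mul, Finset.sum_mul, ← Finset.sum_sub_distrib]
      apply Finset.sum_congr rfl
      intro j hj; simp only [mem_Icc] at hj
      rw [(hodd1 j hj.1 hj.2).2, (heven1 j hj.1 hj.2).2, Real.cos_pi_sub]; ring
    have e2 : ∑ j ∈ Icc (kx+1) M, (L (2*j-1) * Real.cos (B (2*j-1)) + L (2*j) * Real.cos (B (2*j)))
        = -(∑ j ∈ Icc (kx+1) M, L (2*j-1)) * Real.cos Bb + (∑ j ∈ Icc (kx+1) M, L (2*j)) * Real.cos b := by
      rw [neg_mul, neg_add_eq_sub, Finset.sum_mul, Finset.sum_mul, ← Finset.sum_sub_distrib]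
      apply Finset.sum_congr rfl
      intro j hj; simp only [mem_Icc] at hj
      rw [(hodd2 j hj.1 hj.2).2, (heven2 j hj.1 hj.2).2, Real.cos_pi_sub]; ring
    rw [e1, e2, hlen1, hlen2]; ring
end
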